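/- Let λ ∈ ℂ with |λ| = 1 and suppose λ is a Cremer number, i.e. λ is not a root of unity and liminf_{m→∞} |λᵐ − 1|^{1/m} = 0. Then there exist sequences (mⱼ)ⱼ≥1 of natural numbers and (Mⱼ)ⱼ≥1 of positive reals, and sequences (kⱼ)ⱼ≥1, (rⱼ)ⱼ≥1 of natural numbers, such that for all j ≥ 1: (C1) Mⱼ = |λ^{mⱼ} − 1|^{−1/mⱼ} and Mⱼ ≥ 4j²; (C2) 2^{mⱼ} ≥ 1 + j + Σ_{ℓ=1}^{j−1} 2·(2ℓ)^{m_ℓ}·j^{m_ℓ}; (C3) min(mⱼ, rⱼ) > max(m_{j−1}, r_{j−1}) for j ≥ 2; (C4) |λ^{kⱼ mⱼ} − 1| ≥ 1; (C5) kⱼ · Σ_{ℓ=rⱼ}^∞ 2^{−ℓ} < 1. -/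

import Mathlib

open Topology Filter

/-- `λ` is a Cremer number: it has modulus one, is not a root of unity, and
`liminf_{m→∞} |λᵐ − 1|^{1/m} = 0`. -/
def IsCremer (lam : ℂ) : Prop :=
  ‖lam‖ = 1 ∧ (∀ k : ℕ, 1 ≤ k → lam ^ k ≠ 1) ∧
    Filter.liminf (fun m : ℕ => ‖lam ^ m - 1‖ ^ ((1 : ℝ) / m)) Filter.atTop = 0

lemma cremer_frequently {lam : ℂ} (hlam : IsCremer lam) {ε : ℝ} (hε : 0 < ε) (N : ℕ) :
    ∃ m, N ≤ m ∧ ‖lam ^ m - 1‖ ^ ((1:ℝ)/m) < ε := by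
  have hbd : ∀ m : ℕ, ‖lam ^ m - 1‖ ^ ((1:ℝ)/m) ≤ 2 := by
    intro m
    rcases Nat.eq_zero_or_pos m with h | h
    · subst h; norm_num
    · have hA : ‖lam ^ m - 1‖ ≤ 2 := by
        calc ‖lam ^ m - 1‖ ≤ ‖lam ^ m‖ + ‖(1:ℂ)‖ :=
              norm_sub_le _ _
        _ ≤ 2 := by rw [norm_pow, hlam.1, one_pow, norm_one]; norm_num
      have h1 : ((1:ℝ)/m) ≤ 1 := by
        rw [div_le_one (by exact_mod_cast h)]; exact_mod_cast h
      calc ‖lam ^ m - 1‖ ^ ((1:ℝ)/m) ≤ (2:ℝ) ^ ((1:ℝ)/m) :=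
            Real.rpow_le_rpow (norm_nonneg _) hA (by positivity)
      _ ≤ (2:ℝ) ^ (1:ℝ) := Real.rpow_le_rpow_of_exponent_le (by norm_num) h1
      _ = 2 := by norm_num
  have hcb : IsCoboundedUnder (· ≥ ·) atTop
      (fun m : ℕ => ‖lam ^ m - 1‖ ^ ((1:ℝ)/m)) :=
    IsBoundedUnder.isCoboundedUnder_ge (isBoundedUnder_of ⟨2, hbd⟩)
  have hfreq : ∃ᶠ m : ℕ in atTop, ‖lam ^ m - 1‖ ^ ((1:ℝ)/m) < ε := by
    apply frequently_lt_of_liminf_lt hcb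
    rw [hlam.2.2]; exact hε
  exact ((hfreq.and_eventually (eventually_ge_atTop N)).exists).imp
    (fun m h => ⟨h.2, h.1⟩)

lemma exists_pow_far {μ : ℂ} (h1 : ‖μ‖ = 1) (h2 : μ ≠ 1) :
    ∃ k : ℕ, 1 ≤ ‖μ ^ k - 1‖ := by
  set θ := Complex.arg μ with hθdef
  have hexp : Complex.exp (θ * Complex.I) = μ := by
    have := Complex.norm_mul_exp_arg_mul_I μ
    rwa [h1, Complex.ofReal_one, one_mul] at this
  have hθ0 : θ ≠ 0 := by
    intro h
    rw [h] at hexp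
    simp at hexp
    exact h2 hexp.symm
  set t := |θ| with htdef
  have ht : 0 < t := abs_pos.mpr hθ0
  have htπ : t ≤ Real.pi := Complex.abs_arg_le_pi μ
  set k := ⌈(Real.pi/2)/t⌉₊ with hkdef
  have hpi := Real.pi_pos
  have h1k : Real.pi/2 ≤ k * t := by
    have := Nat.le_ceil ((Real.pi/2)/t)
    rwa [div_le_iff₀ ht] at this
  have h2k : (k:ℝ) * t ≤ Real.pi + Real.pi/2 := by
    have hc : (k:ℝ) ≤ (Real.pi/2)/t + 1 :=
      le_of_lt (Nat.ceil_lt_add_one (by positivity))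
    have : (k:ℝ) * t ≤ ((Real.pi/2)/t + 1) * t := by nlinarith
    rw [add_mul, div_mul_cancel₀ _ (ne_of_gt ht)] at this
    nlinarith
  have hcos : Real.cos ((k:ℝ) * t) ≤ 0 :=
    Real.cos_nonpos_of_pi_div_two_le_of_le h1k h2k
  refine ⟨k, ?_⟩
  have hpow : μ ^ k = Complex.exp ((((k:ℝ) * θ : ℝ) : ℂ) * Complex.I) := by
    rw [← hexp, ← Complex.exp_nat_mul]
    push_cast
    ring_nf
  have hre : (μ ^ k - 1).re = Real.cos ((k:ℝ)*θ) - 1 := by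
    rw [hpow]; simp only [Complex.sub_re, Complex.one_re, Complex.exp_ofReal_mul_I_re]
  have him : (μ ^ k - 1).im = Real.sin ((k:ℝ)*θ) := by
    rw [hpow]; simp only [Complex.sub_im, Complex.one_im, Complex.exp_ofReal_mul_I_im, sub_zero]
  have hsq : (‖μ ^ k - 1‖)^2 = 2 - 2 * Real.cos ((k:ℝ)*θ) := by
    rw [Complex.sq_norm, Complex.normSq_apply, hre, him]
    have := Real.sin_sq_add_cos_sq ((k:ℝ)*θ)
    nlinarith
  have hc2 : Real.cos ((k:ℝ)*θ) = Real.cos ((k:ℝ)*t) := by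
    rw [← Real.cos_abs ((k:ℝ)*θ), abs_mul, Nat.abs_cast]
  have habs := norm_nonneg (μ ^ k - 1)
  nlinarith [hsq, hc2, hcos]

def cremerQ (lam : ℂ) (j s : ℕ) (p : ℕ × ℕ × ℕ) : Prop :=
  s < p.1 ∧ s < p.2.2 ∧
  4*(j:ℝ)^2 ≤ ‖lam ^ p.1 - 1‖ ^ (-(1:ℝ)/(p.1:ℝ)) ∧
  1 + j + 2*j*(2*j)^s*j^s ≤ 2 ^ p.1 ∧
  1 ≤ ‖lam ^ (p.2.1 * p.1) - 1‖ ∧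
  (p.2.1:ℝ) * ∑' i : ℕ, ((1:ℝ)/2)^(i + p.2.2) < 1

lemma cremer_step_exists (lam : ℂ) (hlam : IsCremer lam) (j s : ℕ) (hj : 1 ≤ j) :
    ∃ p : ℕ × ℕ × ℕ, cremerQ lam j s p := by
  have hj' : (1:ℝ) ≤ (j:ℝ) := by exact_mod_cast hj
  have hε : 0 < 1/(4*(j:ℝ)^2) := by positivity
  obtain ⟨m, hmN, hm⟩ := cremer_frequently hlam hε
      (max (s+1) (1 + j + 2*j*(2*j)^s*j^s))
  have hsm : s < m :=
    lt_of_lt_of_le (Nat.lt_succ_self s) (le_trans (le_max_left _ _) hmN)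
  have hm1 : 1 ≤ m := by omega
  have hmu : lam ^ m ≠ 1 := hlam.2.1 m hm1
  have habs1 : ‖lam ^ m‖ = 1 := by rw [norm_pow, hlam.1, one_pow]
  obtain ⟨k, hk⟩ := exists_pow_far habs1 hmu
  refine ⟨(m, k, 2*k+s+1), hsm, show s < 2*k+s+1 by omega, ?_, ?_, ?_, ?_⟩
  · -- C1
    have hApos : 0 < ‖lam ^ m - 1‖ :=
      norm_pos_iff.mpr (sub_ne_zero.mpr hmu)
    have hAu : 0 < ‖lam ^ m - 1‖ ^ ((1:ℝ)/m) :=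
      Real.rpow_pos_of_pos hApos _
    rw [neg_div, Real.rpow_neg (norm_nonneg _), ← one_div,
      le_div_iff₀ hAu]
    have h2 := (lt_div_iff₀ (by positivity : (0:ℝ) < 4*(j:ℝ)^2)).mp hm
    nlinarith [hAu.le]
  · -- C2 precursor
    show 1 + j + 2*j*(2*j)^s*j^s ≤ 2 ^ m
    exact le_of_lt (lt_of_le_of_lt (le_trans (le_max_right _ _) hmN) (Nat.lt_two_pow_self (n := m)))
  · -- C4
    rw [mul_comm k m, pow_mul]; exact hk
  · -- C5
    set r := 2*k+s+1 with hr
    have hts : ∑' i : ℕ, ((1:ℝ)/2)^(i + r) = ((1:ℝ)/2)^r * 2 := by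
      simp only [pow_add]
      rw [tsum_mul_right, tsum_geometric_of_lt_one (by norm_num) (by norm_num)]
      norm_num
      ring
    have hkr : 2*k < 2^r := by have := Nat.lt_two_pow_self (n := r); omega
    have hkr' : (2*(k:ℝ)) < 2^r := by exact_mod_cast hkr
    have h2r : (0:ℝ) < 2^r := by positivity
    have heq : (k:ℝ) * (((1:ℝ)/2)^r * 2) = (2*k)/(2^r) := by
      rw [div_pow, one_pow]; field_simp
    rw [hts, heq, div_lt_one h2r]; exact hkr'

noncomputable def cremerStep (lam : ℂ) (hlam : IsCremer lam) (j s : ℕ) : ℕ × ℕ × ℕ :=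
  if hj : 1 ≤ j then (cremer_step_exists lam hlam j s hj).choose else 0

lemma cremerStep_spec (lam : ℂ) (hlam : IsCremer lam) (j s : ℕ) (hj : 1 ≤ j) :
    cremerQ lam j s (cremerStep lam hlam j s) := by
  rw [cremerStep, dif_pos hj]
  exact (cremer_step_exists lam hlam j s hj).choose_spec

noncomputable def cremerF (lam : ℂ) (hlam : IsCremer lam) : ℕ → ℕ × ℕ × ℕ × ℕ
  | 0 => (0, 0, 0, 0)
  | (j+1) =>
      let p := cremerStep lam hlam (j+1) (cremerF lam hlam j).1
      (max p.1 p.2.2, p)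

lemma cremerF_succ_snd (lam : ℂ) (hlam : IsCremer lam) (j : ℕ) :
    (cremerF lam hlam (j+1)).2 = cremerStep lam hlam (j+1) (cremerF lam hlam j).1 := rfl

lemma cremerF_succ_fst (lam : ℂ) (hlam : IsCremer lam) (j : ℕ) :
    (cremerF lam hlam (j+1)).1 =
      max (cremerF lam hlam (j+1)).2.1 (cremerF lam hlam (j+1)).2.2.2 := rfl

lemma cremerF_spec (lam : ℂ) (hlam : IsCremer lam) (j : ℕ) :
    cremerQ lam (j+1) (cremerF lam hlam j).1 (cremerF lam hlam (j+1)).2 := by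
  rw [cremerF_succ_snd]
  exact cremerStep_spec lam hlam (j+1) _ (by omega)

lemma cremerF_fst_lt (lam : ℂ) (hlam : IsCremer lam) (j : ℕ) :
    (cremerF lam hlam j).1 < (cremerF lam hlam (j+1)).1 := by
  have h := cremerF_spec lam hlam j
  have h1 := h.1
  rw [cremerF_succ_fst]
  exact lt_max_of_lt_left h1

lemma cremerF_fst_mono (lam : ℂ) (hlam : IsCremer lam) {i j : ℕ} (h : i ≤ j) :
    (cremerF lam hlam i).1 ≤ (cremerF lam hlam j).1 := by
  induction j with
  | zero => simp_all
  | succ n ih =>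
      rcases Nat.lt_or_ge i (n+1) with h' | h'
      · exact le_trans (ih (by omega)) (cremerF_fst_lt lam hlam n).le
      · have : i = n+1 := by omega
        subst this; rfl

lemma cremerF_m_le_fst (lam : ℂ) (hlam : IsCremer lam) (j : ℕ) (hj : 1 ≤ j) :
    (cremerF lam hlam j).2.1 ≤ (cremerF lam hlam j).1 := by
  obtain ⟨i, rfl⟩ : ∃ i, j = i + 1 := ⟨j - 1, by omega⟩
  rw [cremerF_succ_fst]; exact le_max_left _ _

lemma cremerF_r_le_fst (lam : ℂ) (hlam : IsCremer lam) (j : ℕ) (hj : 1 ≤ j) :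
    (cremerF lam hlam j).2.2.2 ≤ (cremerF lam hlam j).1 := by
  obtain ⟨i, rfl⟩ : ∃ i, j = i + 1 := ⟨j - 1, by omega⟩
  rw [cremerF_succ_fst]; exact le_max_right _ _


/-- For a Cremer number `λ` there are sequences `(mⱼ)`, `(Mⱼ)`, `(kⱼ)`, `(rⱼ)` satisfying
the conditions (C1)–(C5). -/
theorem exists_cremer_sequences (lam : ℂ) (hlam : IsCremer lam) :
    ∃ (m : ℕ → ℕ) (M : ℕ → ℝ) (k : ℕ → ℕ) (r : ℕ → ℕ),
      (∀ j : ℕ, 1 ≤ j →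
        M j = ‖lam ^ m j - 1‖ ^ (-(1 : ℝ) / (m j)) ∧ 4 * (j : ℝ) ^ 2 ≤ M j) ∧
      (∀ j : ℕ, 1 ≤ j →
        (1 : ℝ) + j + ∑ l ∈ Finset.Ico 1 j,
            2 * (2 * (l : ℝ)) ^ m l * (j : ℝ) ^ m l ≤ (2 : ℝ) ^ m j) ∧
      (∀ j : ℕ, 2 ≤ j → max (m (j - 1)) (r (j - 1)) < min (m j) (r j)) ∧
      (∀ j : ℕ, 1 ≤ j → 1 ≤ ‖lam ^ (k j * m j) - 1‖) ∧
      (∀ j : ℕ, 1 ≤ j → (k j : ℝ) * ∑' i : ℕ, ((1 : ℝ) / 2) ^ (i + r j) < 1) := by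
  refine ⟨fun j => (cremerF lam hlam j).2.1,
    fun j => ‖lam ^ (cremerF lam hlam j).2.1 - 1‖ ^
      (-(1:ℝ)/((cremerF lam hlam j).2.1 : ℝ)),
    fun j => (cremerF lam hlam j).2.2.1,
    fun j => (cremerF lam hlam j).2.2.2, ?_, ?_, ?_, ?_, ?_⟩
  · intro j hj
    obtain ⟨i, rfl⟩ : ∃ i, j = i + 1 := ⟨j - 1, by omega⟩
    exact ⟨rfl, (cremerF_spec lam hlam i).2.2.1⟩
  · -- C2
    intro j hj
    obtain ⟨i, rfl⟩ : ∃ i, j = i + 1 := ⟨j - 1, by omega⟩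
    set s := (cremerF lam hlam i).1 with hs
    have hQ := (cremerF_spec lam hlam i).2.2.2.1
    have hQ' : (1:ℝ) + ((i:ℝ)+1) + 2*((i:ℝ)+1)*(2*((i:ℝ)+1))^s*((i:ℝ)+1)^s
        ≤ (2:ℝ)^((cremerF lam hlam (i+1)).2.1) := by exact_mod_cast hQ
    have hml : ∀ l, 1 ≤ l → l ≤ i → (cremerF lam hlam l).2.1 ≤ s := fun l h1 h2 =>
      le_trans (cremerF_m_le_fst lam hlam l h1) (cremerF_fst_mono lam hlam h2)
    set B : ℝ := 2*(2*((i:ℝ)+1))^s*((i:ℝ)+1)^s with hB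
    have hB0 : (0:ℝ) ≤ B := by positivity
    have hterm : ∀ l ∈ Finset.Ico 1 (i+1),
        2 * (2*(l:ℝ))^((cremerF lam hlam l).2.1) * ((i+1:ℕ):ℝ)^((cremerF lam hlam l).2.1)
          ≤ B := by
      intro l hl
      rw [Finset.mem_Ico] at hl
      have hl1 : 1 ≤ l := hl.1
      have hli : l ≤ i := by omega
      have hm := hml l hl1 hli
      have hlr : (l:ℝ) ≤ (i:ℝ)+1 := by
        have : (l:ℝ) ≤ (i:ℝ) := by exact_mod_cast hli
        linarith
      have h1 : (2*(l:ℝ))^((cremerF lam hlam l).2.1) ≤ (2*((i:ℝ)+1))^s := by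
        calc (2*(l:ℝ))^((cremerF lam hlam l).2.1)
            ≤ (2*((i:ℝ)+1))^((cremerF lam hlam l).2.1) :=
              pow_le_pow_left₀ (by positivity) (by linarith) _
          _ ≤ (2*((i:ℝ)+1))^s := by
              apply pow_le_pow_right₀ _ hm
              have : (1:ℝ) ≤ (l:ℝ) := by exact_mod_cast hl1
              linarith
      have h2 : ((i+1:ℕ):ℝ)^((cremerF lam hlam l).2.1) ≤ ((i:ℝ)+1)^s := by
        push_cast
        apply pow_le_pow_left₀ (by positivity) le_rfl _ |>.trans
        exact pow_le_pow_right₀ (by linarith [Nat.cast_nonneg (α := ℝ) i]) hm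
      rw [hB]
      have h1' : (0:ℝ) ≤ (2*(l:ℝ))^((cremerF lam hlam l).2.1) := by positivity
      have h2' : (0:ℝ) ≤ ((i+1:ℕ):ℝ)^((cremerF lam hlam l).2.1) := by positivity
      have h3' : (0:ℝ) ≤ (2*((i:ℝ)+1))^s := by positivity
      nlinarith
    have hsum := Finset.sum_le_card_nsmul (Finset.Ico 1 (i+1)) _ B hterm
    have hcard : (Finset.Ico 1 (i+1)).card = i := by simp
    rw [hcard, nsmul_eq_mul] at hsum
    have hiB : (i:ℝ) * B ≤ ((i:ℝ)+1) * B :=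
      mul_le_mul_of_nonneg_right (by linarith) hB0
    push_cast
    push_cast at hsum
    calc (1:ℝ) + ((i:ℝ)+1) + ∑ l ∈ Finset.Ico 1 (i+1),
          2 * (2*(l:ℝ))^((cremerF lam hlam l).2.1) * ((i:ℝ)+1)^((cremerF lam hlam l).2.1)
        ≤ 1 + ((i:ℝ)+1) + ((i:ℝ)+1) * B := by
          have := le_trans hsum hiB
          linarith [this]
      _ = 1 + ((i:ℝ)+1) + 2*((i:ℝ)+1)*(2*((i:ℝ)+1))^s*((i:ℝ)+1)^s := by rw [hB]; ring
      _ ≤ (2:ℝ)^((cremerF lam hlam (i+1)).2.1) := hQ'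
  · -- C3
    intro j hj
    obtain ⟨i, rfl⟩ : ∃ i, j = i + 2 := ⟨j - 2, by omega⟩
    have hQ := cremerF_spec lam hlam (i+1)
    have hm' := cremerF_m_le_fst lam hlam (i+1) (by omega)
    have hr' := cremerF_r_le_fst lam hlam (i+1) (by omega)
    have hsub : i + 2 - 1 = i + 1 := rfl
    rw [hsub]
    exact max_lt (lt_min (lt_of_le_of_lt hm' hQ.1) (lt_of_le_of_lt hm' hQ.2.1))
      (lt_min (lt_of_le_of_lt hr' hQ.1) (lt_of_le_of_lt hr' hQ.2.1))
  · intro j hj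
    obtain ⟨i, rfl⟩ : ∃ i, j = i + 1 := ⟨j - 1, by omega⟩
    exact (cremerF_spec lam hlam i).2.2.2.2.1
  · intro j hj
    obtain ⟨i, rfl⟩ : ∃ i, j = i + 1 := ⟨j - 1, by omega⟩
    exact (cremerF_spec lam hlam i).2.2.2.2.2
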